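/- If a finite group G admits a complete mapping, then every Sylow 2-subgroup of G is either trivial or non-cyclic. -/

import Mathlib

open Finset

/-- Sum of all elements of `ZMod n` as a natural number cast. -/
lemma sum_zmod_univ (n : ℕ) [NeZero n] :
    ∑ i : ZMod n, i = ((∑ j ∈ Finset.range n, j : ℕ) : ZMod n) := by
  push_cast
  refine Finset.sum_nbij' (fun (i : ZMod n) => i.val) (fun j => (j : ZMod n))
    (fun i _ => Finset.mem_range.mpr (ZMod.val_lt i)) (fun j _ => Finset.mem_univ _)
    (fun i _ => ?_) (fun j hj => ZMod.val_cast_of_lt (Finset.mem_range.mp hj))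
    (fun i _ => ?_)
  · exact ZMod.natCast_rightInverse i
  · exact (ZMod.natCast_rightInverse i).symm

theorem stmt15 (G : Type*) [Group G] [Finite G]
    (h : ∃ φ : G → G, Function.Bijective φ ∧ Function.Bijective (fun x => x * φ x)) :
    ∀ P : Sylow 2 G, (P : Subgroup G) = ⊥ ∨ ¬ IsCyclic (P : Subgroup G) := by
  haveI : Fact (Nat.Prime 2) := ⟨Nat.prime_two⟩
  haveI := Fintype.ofFinite G
  intro P
  classical
  rw [or_iff_not_imp_right, not_not]
  intro hcyc
  by_contra hbot
  set Q : Subgroup G := (P : Subgroup G) with hQ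
  haveI : IsMulCommutative Q := by
    constructor; constructor; intro a b
    letI := hcyc.commGroup
    exact mul_comm a b
  obtain ⟨k, hk⟩ := P.2.exists_card_eq
  -- Step 1: N(Q) ≤ C(Q)
  have hP : Subgroup.normalizer (Q : Set G) ≤ Subgroup.centralizer (Q : Set G) := by
    let f := Q.normalizerMonoidHom
    have h1 : Q.subgroupOf (Subgroup.normalizer (Q : Set G)) ≤ f.ker := by
      rw [Subgroup.normalizerMonoidHom_ker]
      intro x hx
      rw [Subgroup.mem_subgroupOf] at hx ⊢
      exact Subgroup.le_centralizer Q hx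
    have hodd : ¬ 2 ∣ Nat.card f.range := by
      intro hdvd
      have h2 : f.ker.index ∣ (Q.subgroupOf (Subgroup.normalizer (Q : Set G))).index :=
        Subgroup.index_dvd_of_le h1
      have h3 : (Q.subgroupOf (Subgroup.normalizer (Q : Set G))).index ∣ Q.index :=
        Subgroup.relIndex_dvd_index_of_le Subgroup.le_normalizer
      rw [Subgroup.index_ker] at h2
      exact P.not_dvd_index (hdvd.trans (h2.trans h3))
    have hdvd2 : Nat.card f.range ∣ Nat.card (MulAut Q) :=
      Subgroup.card_subgroup_dvd_card f.range
    have hAut : Nat.card (MulAut Q) = Nat.totient (2 ^ k) := by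
      rw [IsCyclic.card_mulAut, hk]
    have hone : Nat.card f.range = 1 := by
      rcases Nat.eq_zero_or_pos k with hk0 | hkpos
      · rw [hAut, hk0] at hdvd2
        simpa using Nat.eq_one_of_dvd_one (by simpa using hdvd2)
      · rw [hAut, Nat.totient_prime_pow Nat.prime_two hkpos] at hdvd2
        have hcop : Nat.Coprime (Nat.card f.range) 2 :=
          (Nat.coprime_comm.mp (Nat.Prime.coprime_iff_not_dvd Nat.prime_two |>.mpr hodd))
        have hcop2 : Nat.Coprime (Nat.card f.range) (2 ^ (k - 1) * (2 - 1)) :=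
          Nat.Coprime.mul_right (hcop.pow_right _) (by simp)
        exact Nat.Coprime.eq_one_of_dvd hcop2 hdvd2
    have hrange : f.range = ⊥ := Subgroup.card_eq_one.mp hone
    intro x hx
    have hfx : f ⟨x, hx⟩ = 1 := by
      have : f ⟨x, hx⟩ ∈ f.range := ⟨⟨x, hx⟩, rfl⟩
      rwa [hrange, Subgroup.mem_bot] at this
    have : (⟨x, hx⟩ : Subgroup.normalizer (Q : Set G)) ∈ f.ker := hfx
    rw [Subgroup.normalizerMonoidHom_ker, Subgroup.mem_subgroupOf] at this
    exact this
  -- Step 2: Burnside transfer: surjection G →* Q with kernel of odd order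
  haveI : Q.FiniteIndex := inferInstance
  let g := MonoidHom.transferSylow P hP
  have hgres : Function.Bijective (g.domRestrict Q) :=
    (MonoidHom.transferSylow_domRestrict_eq_pow P hP).symm ▸
      (P.2.powEquiv' P.not_dvd_index).bijective
  have hg : Function.Surjective g := fun y => by
    obtain ⟨x, hx⟩ := hgres.2 y
    exact ⟨x, hx⟩
  have hkodd : ¬ 2 ∣ Nat.card g.ker := MonoidHom.not_dvd_card_ker_transferSylow P hP
  -- Step 3: the counting argument
  set n : ℕ := Nat.card Q with hn
  have hn2 : n = 2 ^ k := hk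
  have hkpos : 0 < k := by
    rcases Nat.eq_zero_or_pos k with hk0 | hkpos
    · exfalso; apply hbot
      have : Nat.card Q = 1 := by rw [← hn, hn2, hk0, pow_zero]
      exact Subgroup.eq_bot_of_card_eq _ this
    · exact hkpos
  haveI : NeZero n := ⟨by rw [hn2]; positivity⟩
  let e : Q ≃* Multiplicative (ZMod n) := (zmodCyclicMulEquiv hcyc).symm
  let π : G →* Multiplicative (ZMod n) := e.toMonoidHom.comp g
  obtain ⟨φ, hφ, hψ⟩ := h
  set S : ZMod n := ∑ x : G, Multiplicative.toAdd (π x) with hS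
  -- S = 0 from the complete mapping
  have a1 : ∑ x : G, Multiplicative.toAdd (π (x * φ x)) = S :=
    Fintype.sum_bijective _ hψ _ _ (fun x => rfl)
  have a2 : ∑ x : G, Multiplicative.toAdd (π (φ x)) = S :=
    Fintype.sum_bijective φ hφ _ _ (fun x => rfl)
  have a3 : ∑ x : G, Multiplicative.toAdd (π (x * φ x)) = S + S := by
    simp only [map_mul, toAdd_mul]
    rw [Finset.sum_add_distrib, a2]
  have hS0 : S = 0 := by
    have := a1.symm.trans a3
    exact (left_eq_add.mp this)
  -- Compute S by fibers of g
  set m : ℕ := Nat.card g.ker with hm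
  have hfib : ∀ y : Q, (Finset.univ.filter (fun x : G => g x = y)).card = m := by
    intro y
    have e1 : (g ⁻¹' {y}) ≃ g.ker := MonoidHom.fiberEquivKerOfSurjective hg y
    have : Nat.card (g ⁻¹' {y}) = m := Nat.card_congr e1
    rw [← this, Nat.card_eq_fintype_card, ← Fintype.card_subtype]
    apply Fintype.card_congr
    exact Equiv.subtypeEquivRight (by intro x; simp [Set.mem_preimage])
  have hSfib : S = ∑ y : Q, (m : ℕ) • Multiplicative.toAdd (e y) := by
    rw [hS, ← Finset.sum_fiberwise Finset.univ (fun x : G => g x)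
      (fun x => Multiplicative.toAdd (π x))]
    apply Finset.sum_congr rfl
    intro y _
    have hcongr : ∀ x ∈ Finset.univ.filter (fun x : G => g x = y),
        Multiplicative.toAdd (π x) = Multiplicative.toAdd (e y) := by
      intro x hx
      have hgx : g x = y := (Finset.mem_filter.mp hx).2
      show Multiplicative.toAdd (e (g x)) = Multiplicative.toAdd (e y)
      rw [hgx]
    rw [Finset.sum_congr rfl hcongr, Finset.sum_const, hfib y]
  have hsum : S = (m : ZMod n) * ((∑ j ∈ Finset.range n, j : ℕ) : ZMod n) := by
    rw [hSfib]
    have : ∑ y : Q, Multiplicative.toAdd (e y) = ∑ i : ZMod n, i :=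
      Fintype.sum_bijective (fun y => Multiplicative.toAdd (e y))
        ((Multiplicative.toAdd.bijective).comp e.bijective) _ _ (fun x => rfl)
    rw [← Finset.smul_sum, this, sum_zmod_univ, nsmul_eq_mul]
  -- derive the contradiction
  rw [hS0] at hsum
  have hdvd : n ∣ m * (∑ j ∈ Finset.range n, j) := by
    rw [← ZMod.natCast_eq_zero_iff, Nat.cast_mul]
    exact hsum.symm
  -- ∑_{j<n} j = (n/2) * (n-1) with n = 2^k
  have hsumval : ∑ j ∈ Finset.range n, j = 2 ^ (k - 1) * (n - 1) := by
    have h2 : (∑ j ∈ Finset.range n, j) * 2 = n * (n - 1) := Finset.sum_range_id_mul_two n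
    have hne : n = 2 * 2 ^ (k - 1) := by
      rw [hn2, ← pow_succ']
      congr 1
      omega
    have h4 : (∑ j ∈ Finset.range n, j) * 2 = (2 ^ (k - 1) * (n - 1)) * 2 := by
      rw [h2, hne]; ring
    exact Nat.eq_of_mul_eq_mul_right (by norm_num) h4
  rw [hsumval] at hdvd
  have hcop : Nat.Coprime n (n - 1) := by
    have h1 : 1 ≤ n := Nat.one_le_iff_ne_zero.mpr (NeZero.ne n)
    have h2 : n - 1 + 1 = n := by omega
    simpa [h2] using Nat.coprime_self_add_left.mpr (Nat.coprime_one_left (n - 1))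
  have hdvd2 : n ∣ m * 2 ^ (k - 1) := by
    have : n ∣ (m * 2 ^ (k - 1)) * (n - 1) := by
      rwa [← mul_assoc] at hdvd
    exact hcop.dvd_of_dvd_mul_right this
  have h2dvd : 2 ∣ m := by
    have hne : n = 2 * 2 ^ (k - 1) := by
      rw [hn2, ← pow_succ']
      congr 1
      omega
    rw [hne] at hdvd2
    have hpos : 0 < 2 ^ (k - 1) := by positivity
    exact (Nat.mul_dvd_mul_iff_right hpos).mp hdvd2
  exact hkodd h2dvd
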